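/- arXiv:2508.05120 — 2 statements merged into one kernel-verified Lean document; each statement's English description precedes it below -/
import Mathlib

section
/- For every real x, the function f(x) = (1/sinh x − 1/x)·(1/x) (extended continuously by f(0) = −1/6) satisfies |f(x)| ≤ 1/6. -/
open Real Set

/-- `f(x) = (1/sinh x − 1/x)·(1/x)`, extended continuously by `f(0) = −1/6`. -/
noncomputable def fAux (x : ℝ) : ℝ :=
  if x = 0 then -1/6 else (1 / Real.sinh x - 1 / x) / x

private lemma hd2 (y : ℝ) : HasDerivAt (fun y : ℝ => (y^2-4)*Real.sinh y + 4*y*Real.cosh y)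
    (y^2*Real.cosh y + 6*y*Real.sinh y) y := by
  have h1 := ((hasDerivAt_pow 2 y).sub_const 4).mul (Real.hasDerivAt_sinh y)
  have h2 := ((hasDerivAt_id y).const_mul 4).mul (Real.hasDerivAt_cosh y)
  refine (h1.add h2).congr_deriv ?_
  simp only [id_eq]; push_cast; ring

private lemma hd1 (y : ℝ) : HasDerivAt (fun y : ℝ => 2*y*Real.sinh y + (y^2-6)*Real.cosh y + 6)
    ((y^2-4)*Real.sinh y + 4*y*Real.cosh y) y := by
  have h1 := ((hasDerivAt_id y).const_mul 2).mul (Real.hasDerivAt_sinh y)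
  have h2 := ((hasDerivAt_pow 2 y).sub_const 6).mul (Real.hasDerivAt_cosh y)
  refine ((h1.add h2).add_const 6).congr_deriv ?_
  simp only [id_eq]; push_cast; ring

private lemma hd0 (y : ℝ) : HasDerivAt (fun y : ℝ => (y^2-6)*Real.sinh y + 6*y)
    (2*y*Real.sinh y + (y^2-6)*Real.cosh y + 6) y := by
  have h1 := ((hasDerivAt_pow 2 y).sub_const 6).mul (Real.hasDerivAt_sinh y)
  have h2 := (hasDerivAt_id y).const_mul 6
  refine (h1.add h2).congr_deriv ?_
  push_cast; ring

private lemma key (x : ℝ) (hx : 0 ≤ x) : 6 * (Real.sinh x - x) ≤ x^2 * Real.sinh x := by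
  have m2 : MonotoneOn (fun y : ℝ => (y^2-4)*Real.sinh y + 4*y*Real.cosh y) (Set.Ici 0) := by
    apply monotoneOn_of_deriv_nonneg (convex_Ici 0)
      (Continuous.continuousOn (by continuity))
      (fun y _ => (hd2 y).differentiableAt.differentiableWithinAt)
    intro y hy
    rw [(hd2 y).deriv]
    have hy0 : (0:ℝ) ≤ y := le_of_lt (by simpa using hy)
    have := Real.sinh_nonneg_iff.mpr hy0
    have := Real.cosh_pos (x := y)
    positivity
  have g2nn : ∀ y ∈ Set.Ici (0:ℝ), 0 ≤ (y^2-4)*Real.sinh y + 4*y*Real.cosh y := by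
    intro y hy
    have := m2 self_mem_Ici hy (by exact hy)
    simpa using this
  have m1 : MonotoneOn (fun y : ℝ => 2*y*Real.sinh y + (y^2-6)*Real.cosh y + 6) (Set.Ici 0) := by
    apply monotoneOn_of_deriv_nonneg (convex_Ici 0)
      (Continuous.continuousOn (by continuity))
      (fun y _ => (hd1 y).differentiableAt.differentiableWithinAt)
    intro y hy
    rw [(hd1 y).deriv]
    exact g2nn y (interior_subset hy)
  have g1nn : ∀ y ∈ Set.Ici (0:ℝ), 0 ≤ 2*y*Real.sinh y + (y^2-6)*Real.cosh y + 6 := by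
    intro y hy
    have := m1 self_mem_Ici hy (by exact hy)
    simpa [Real.cosh_zero] using this
  have m0 : MonotoneOn (fun y : ℝ => (y^2-6)*Real.sinh y + 6*y) (Set.Ici 0) := by
    apply monotoneOn_of_deriv_nonneg (convex_Ici 0)
      (Continuous.continuousOn (by continuity))
      (fun y _ => (hd0 y).differentiableAt.differentiableWithinAt)
    intro y hy
    rw [(hd0 y).deriv]
    exact g1nn y (interior_subset hy)
  have := m0 self_mem_Ici (mem_Ici.mpr hx) hx
  simp only [Real.sinh_zero] at this
  nlinarith [this]

private lemma fAux_neg (x : ℝ) : fAux (-x) = fAux x := by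
  unfold fAux
  rcases eq_or_ne x 0 with h | h
  · simp [h]
  · rw [if_neg (neg_ne_zero.mpr h), if_neg h, Real.sinh_neg]
    rw [div_neg, one_div_neg_eq_neg_one_div, one_div_neg_eq_neg_one_div]
    ring

/-- For every real `x`, `|f(x)| ≤ 1/6`. -/
theorem stmt4 : ∀ x : ℝ, |fAux x| ≤ 1/6 := by
  suffices h : ∀ x : ℝ, 0 ≤ x → |fAux x| ≤ 1/6 by
    intro x
    rcases le_total 0 x with hx | hx
    · exact h x hx
    · rw [← fAux_neg]; exact h (-x) (by linarith)
  intro x hx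
  rcases eq_or_lt_of_le hx with h0 | h0
  · norm_num [fAux, ← h0, abs_le]
  · have hne : x ≠ 0 := ne_of_gt h0
    have hs : x < Real.sinh x := Real.self_lt_sinh_iff.mpr h0
    have hs0 : 0 < Real.sinh x := lt_trans h0 hs
    rw [fAux, if_neg hne, abs_le]
    constructor
    · have h1 : 1/Real.sinh x - 1/x = -((Real.sinh x - x)/(x * Real.sinh x)) := by
        field_simp
        ring
      rw [le_div_iff₀ h0, h1, neg_mul, neg_le_neg_iff, div_le_iff₀ (by positivity)]
      nlinarith [key x hx]
    · have h2 : 1 / Real.sinh x ≤ 1 / x := one_div_le_one_div_of_le h0 (le_of_lt hs)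
      have h3 : (1 / Real.sinh x - 1 / x) / x ≤ 0 :=
        div_nonpos_of_nonpos_of_nonneg (by linarith) hx
      linarith
end

section
/- Let M(t) be a 4×4 real symmetric matrix family of the Gram form with entries depending continuously on edge lengths (l₁(t),…,l₆(t)) ∈ ℝ_{≥0}⁶, and suppose det Gram(l) < 0 on a set 𝓛. Then for l₁,…,l₆ with det Gram(l) < 0 and any fixed k, sinh²(l_k) · det Gram(l) = G_{pq}² − G_{pp}G_{qq} where {p,q} is the pair of indices of the two truncation triangles joined by edge k; in particular G_{pq}² − G_{pp}G_{qq} < 0, so the ratio G_{pq}/√(G_{pp}G_{qq}) lies in (−1, 1) (the cofactors G_{pp}, G_{qq} being nonzero of the same sign). -/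
/-- The Gram matrix `Gram(l₁,…,l₆)` of a (generalized) truncated hyperideal tetrahedron:
the `(i,j)` entry is `−cosh` of the length of the edge joining truncation triangles
`Tᵢ` and `Tⱼ` (`l₁ ↔ (1,2)`, `l₂ ↔ (1,3)`, `l₆ ↔ (1,4)`, `l₃ ↔ (2,3)`, `l₅ ↔ (2,4)`,
`l₄ ↔ (3,4)`), with `1` on the diagonal. -/
noncomputable def gram (l₁ l₂ l₃ l₄ l₅ l₆ : ℝ) : Matrix (Fin 4) (Fin 4) ℝ :=
  !![1, -Real.cosh l₁, -Real.cosh l₂, -Real.cosh l₆;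
     -Real.cosh l₁, 1, -Real.cosh l₃, -Real.cosh l₅;
     -Real.cosh l₂, -Real.cosh l₃, 1, -Real.cosh l₄;
     -Real.cosh l₆, -Real.cosh l₅, -Real.cosh l₄, 1]

/-- The `(3,3)` cofactor (1-indexed) of the Gram matrix. -/
noncomputable def cofG33 (l₁ l₂ l₃ l₄ l₅ l₆ : ℝ) : ℝ :=
  (!![1, -Real.cosh l₁, -Real.cosh l₆;
      -Real.cosh l₁, 1, -Real.cosh l₅;
      -Real.cosh l₆, -Real.cosh l₅, 1] : Matrix (Fin 3) (Fin 3) ℝ).det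

/-- The `(4,4)` cofactor (1-indexed) of the Gram matrix. -/
noncomputable def cofG44 (l₁ l₂ l₃ l₄ l₅ l₆ : ℝ) : ℝ :=
  (!![1, -Real.cosh l₁, -Real.cosh l₂;
      -Real.cosh l₁, 1, -Real.cosh l₃;
      -Real.cosh l₂, -Real.cosh l₃, 1] : Matrix (Fin 3) (Fin 3) ℝ).det

/-- The `(3,4)` cofactor (1-indexed) of the Gram matrix. -/
noncomputable def cofG34 (l₁ l₂ l₃ l₄ l₅ l₆ : ℝ) : ℝ :=
  -(!![1, -Real.cosh l₁, -Real.cosh l₂;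
       -Real.cosh l₁, 1, -Real.cosh l₃;
       -Real.cosh l₆, -Real.cosh l₅, -Real.cosh l₄] : Matrix (Fin 3) (Fin 3) ℝ).det

/-- key instance `k = 1`, `(p,q) = (3,4)`.  If `l₁,…,l₆ ≥ 0`,
`l₁ > 0` and `det Gram(l) < 0`, then `sinh²(l₁)·det Gram(l) = G₃₄² − G₃₃G₄₄`; in
particular `G₃₄² − G₃₃G₄₄ < 0`, the cofactors `G₃₃`, `G₄₄` are nonzero of the same
sign, and the ratio `G₃₄/√(G₃₃G₄₄)` lies in `(−1, 1)`. -/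
theorem stmt19 (l₁ l₂ l₃ l₄ l₅ l₆ : ℝ)
    (hl₁ : 0 ≤ l₁) (hl₂ : 0 ≤ l₂) (hl₃ : 0 ≤ l₃)
    (hl₄ : 0 ≤ l₄) (hl₅ : 0 ≤ l₅) (hl₆ : 0 ≤ l₆)
    (h1 : 0 < l₁) (hdet : (gram l₁ l₂ l₃ l₄ l₅ l₆).det < 0) :
    Real.sinh l₁ ^ 2 * (gram l₁ l₂ l₃ l₄ l₅ l₆).det =
        cofG34 l₁ l₂ l₃ l₄ l₅ l₆ ^ 2 -
          cofG33 l₁ l₂ l₃ l₄ l₅ l₆ * cofG44 l₁ l₂ l₃ l₄ l₅ l₆ ∧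
    cofG34 l₁ l₂ l₃ l₄ l₅ l₆ ^ 2 -
        cofG33 l₁ l₂ l₃ l₄ l₅ l₆ * cofG44 l₁ l₂ l₃ l₄ l₅ l₆ < 0 ∧
    cofG33 l₁ l₂ l₃ l₄ l₅ l₆ ≠ 0 ∧ cofG44 l₁ l₂ l₃ l₄ l₅ l₆ ≠ 0 ∧
    0 < cofG33 l₁ l₂ l₃ l₄ l₅ l₆ * cofG44 l₁ l₂ l₃ l₄ l₅ l₆ ∧
    -1 < cofG34 l₁ l₂ l₃ l₄ l₅ l₆ /
        Real.sqrt (cofG33 l₁ l₂ l₃ l₄ l₅ l₆ * cofG44 l₁ l₂ l₃ l₄ l₅ l₆) ∧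
    cofG34 l₁ l₂ l₃ l₄ l₅ l₆ /
        Real.sqrt (cofG33 l₁ l₂ l₃ l₄ l₅ l₆ * cofG44 l₁ l₂ l₃ l₄ l₅ l₆) < 1 := by

  set c₁ := Real.cosh l₁ with hc₁
  have hD : (gram l₁ l₂ l₃ l₄ l₅ l₆).det = (gram l₁ l₂ l₃ l₄ l₅ l₆).det := rfl
  have hsinh : Real.sinh l₁ ^ 2 = c₁ ^ 2 - 1 := by
    have := Real.cosh_sq l₁
    nlinarith [this]
  have key : Real.sinh l₁ ^ 2 * (gram l₁ l₂ l₃ l₄ l₅ l₆).det =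
      cofG34 l₁ l₂ l₃ l₄ l₅ l₆ ^ 2 -
        cofG33 l₁ l₂ l₃ l₄ l₅ l₆ * cofG44 l₁ l₂ l₃ l₄ l₅ l₆ := by
    rw [hsinh]
    simp only [gram, cofG33, cofG44, cofG34, Matrix.det_succ_row_zero,
      Fin.sum_univ_succ, Matrix.det_fin_one, Matrix.submatrix_apply, Fin.succAbove,
      Matrix.cons_val', Matrix.cons_val_zero, Matrix.cons_val_one, Matrix.head_cons,
      Matrix.empty_val', Matrix.cons_val_fin_one, Matrix.head_fin_const, Fin.sum_univ_zero,
      Matrix.cons_val_succ, Fin.val_zero, Fin.val_succ, Matrix.tail_cons]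
    norm_num [Fin.lt_def, Fin.succAbove, Fin.castSucc, Fin.castAdd, Fin.castLE, Matrix.cons_val_two, Matrix.tail_cons, Matrix.head_cons, Matrix.cons_val_three]
    rw [hc₁]
    ring
  have hs : 0 < Real.sinh l₁ := Real.sinh_pos_iff.2 h1
  have h2 : cofG34 l₁ l₂ l₃ l₄ l₅ l₆ ^ 2 -
      cofG33 l₁ l₂ l₃ l₄ l₅ l₆ * cofG44 l₁ l₂ l₃ l₄ l₅ l₆ < 0 := by
    rw [← key]
    exact mul_neg_of_pos_of_neg (by positivity) hdet
  have hP : 0 < cofG33 l₁ l₂ l₃ l₄ l₅ l₆ * cofG44 l₁ l₂ l₃ l₄ l₅ l₆ := by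
    nlinarith [sq_nonneg (cofG34 l₁ l₂ l₃ l₄ l₅ l₆)]
  have hsq : 0 < Real.sqrt (cofG33 l₁ l₂ l₃ l₄ l₅ l₆ * cofG44 l₁ l₂ l₃ l₄ l₅ l₆) :=
    Real.sqrt_pos.2 hP
  have hsqsq : Real.sqrt (cofG33 l₁ l₂ l₃ l₄ l₅ l₆ * cofG44 l₁ l₂ l₃ l₄ l₅ l₆) ^ 2 =
      cofG33 l₁ l₂ l₃ l₄ l₅ l₆ * cofG44 l₁ l₂ l₃ l₄ l₅ l₆ := Real.sq_sqrt hP.le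
  have habs : |cofG34 l₁ l₂ l₃ l₄ l₅ l₆| <
      Real.sqrt (cofG33 l₁ l₂ l₃ l₄ l₅ l₆ * cofG44 l₁ l₂ l₃ l₄ l₅ l₆) := by
    rw [← Real.sqrt_sq_eq_abs]
    apply Real.sqrt_lt_sqrt (sq_nonneg _)
    linarith
  have hlt := abs_lt.1 habs
  refine ⟨key, h2, ?_, ?_, hP, ?_, ?_⟩
  · intro h; rw [h] at hP; simp at hP
  · intro h; rw [h] at hP; simp at hP
  · rw [lt_div_iff₀ hsq]; linarith [hlt.1]
  · rw [div_lt_one hsq]; exact hlt.2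
end
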